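/- Let D = (d_1, d_2, ...) be a Young diagram in Y_n and consider the k-th diagonal of the triangulation Λ_{n+2}^{-1}(D) (diagonals ordered so that diagonal k has tail d_k). Then its head equals l_k = 1 + k + d_k - max({m : m < k and m + d_m > k + d_k} ∪ {0}). -/

import Mathlib

/-- `(a,b)` is a diagonal of the convex `n`-gon with vertices `0, …, n-1`. -/
def IsDiagonal (n a b : ℕ) : Prop :=
  a + 2 ≤ b ∧ b ≤ n - 1 ∧ ¬(a = 0 ∧ b = n - 1)

/-- Two diagonals (as ordered pairs, smaller endpoint first) cross each other. -/
def Crossing (p q : ℕ × ℕ) : Prop :=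
  (p.1 < q.1 ∧ q.1 < p.2 ∧ p.2 < q.2) ∨ (q.1 < p.1 ∧ p.1 < q.2 ∧ q.2 < p.2)

/-- A triangulation of the convex `n`-gon: a set of `n - 3` pairwise
non-crossing diagonals (equivalently, a maximal non-crossing set of diagonals). -/
def IsTriangulation (n : ℕ) (T : Finset (ℕ × ℕ)) : Prop :=
  (∀ p ∈ T, IsDiagonal n p.1 p.2) ∧
  (∀ p ∈ T, ∀ q ∈ T, ¬ Crossing p q) ∧
  T.card = n - 3
/-- The list of tails (smaller endpoints) of the diagonals of `T`,
sorted in decreasing order. -/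
def tails (T : Finset (ℕ × ℕ)) : List ℕ :=
  (T.val.map Prod.fst).sort (· ≥ ·)

/-- `lam T k` is the `k`-th largest tail `λ_k` of a diagonal of `T`
(`k ≥ 1`; it is `0` if `T` has fewer than `k` diagonals). -/
def lam (T : Finset (ℕ × ℕ)) : ℕ → ℕ :=
  fun k => if k = 0 then 0 else (tails T).getD (k - 1) 0

/-- The partition `f` (with `f k` the length of row `k`, `k ≥ 1`) lies in `Y_n`:
`f k ≤ n - k` for all `k ≥ 1`. -/
def InY (n : ℕ) (f : ℕ → ℕ) : Prop :=
  f 0 = 0 ∧ (∀ k, 1 ≤ k → f (k + 1) ≤ f k) ∧ (∀ k, 1 ≤ k → f k ≤ n - k)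

/-- The position of the diagonal `p` in the ordering of diagonals of `T`:
`(a,b)` precedes `(c,d)` iff `a > c`, or `a = c` and `b < d`.  The diagonal of
position (number) `k` has tail `λ_k`. -/
def diagPos (T : Finset (ℕ × ℕ)) (p : ℕ × ℕ) : ℕ :=
  (T.filter (fun q => p.1 < q.1 ∨ (q.1 = p.1 ∧ q.2 < p.2))).card + 1

/-- `headFormula d k = 1 + k + d_k - max({m : m < k, m + d_m > k + d_k} ∪ {0})`. -/
def headFormula (d : ℕ → ℕ) (k : ℕ) : ℕ :=
  1 + (k + d k -
    (insert 0 ((Finset.Ico 1 k).filter (fun m => k + d k < m + d m))).max'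
      (Finset.insert_nonempty 0 _))

def GenDiag (V : Finset ℕ) (p : ℕ × ℕ) : Prop :=
  p.1 ∈ V ∧ p.2 ∈ V ∧ (∃ v ∈ V, p.1 < v ∧ v < p.2) ∧ (∃ v ∈ V, v < p.1 ∨ p.2 < v)

lemma noncross_card : ∀ (N : ℕ) (V : Finset ℕ) (F : Finset (ℕ × ℕ)),
    V.card ≤ N → (∀ p ∈ F, GenDiag V p) →
    (∀ p ∈ F, ∀ q ∈ F, ¬ Crossing p q) → F.card ≤ V.card - 3 := by
  intro N
  induction N with
  | zero =>
      intro V F hV hF hC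
      rcases F.eq_empty_or_nonempty with rfl | ⟨p, hp⟩
      · simp
      · obtain ⟨h1, -, -, -⟩ := hF p hp
        have : 0 < V.card := Finset.card_pos.mpr ⟨p.1, h1⟩
        omega
  | succ N ih =>
      intro V F hV hF hC
      rcases F.eq_empty_or_nonempty with rfl | ⟨p, hp⟩
      · simp
      obtain ⟨ha, hb, ⟨v, hv, hv1, hv2⟩, ⟨w, hw, hw'⟩⟩ := hF p hp
      classical
      -- inside family
      have hF1sub : ∀ q ∈ F.filter (fun q => q ≠ p ∧ p.1 ≤ q.1 ∧ q.2 ≤ p.2),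
          GenDiag (V.filter (fun x => p.1 ≤ x ∧ x ≤ p.2)) q := by
        intro q hq
        rw [Finset.mem_filter] at hq
        obtain ⟨hqF, hqp, h1, h2⟩ := hq
        obtain ⟨hx1, hx2, ⟨u, hu, hu1, hu2⟩, -⟩ := hF q hqF
        refine ⟨Finset.mem_filter.mpr ⟨hx1, by omega⟩, Finset.mem_filter.mpr ⟨hx2, by omega⟩,
          ⟨u, Finset.mem_filter.mpr ⟨hu, by omega⟩, hu1, hu2⟩, ?_⟩
        by_cases hc : p.1 < q.1
        · exact ⟨p.1, Finset.mem_filter.mpr ⟨ha, le_rfl, by omega⟩, Or.inl hc⟩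
        · have hq1 : q.1 = p.1 := by omega
          have hne : q.2 ≠ p.2 := fun h => hqp (Prod.ext_iff.mpr ⟨hq1, h⟩)
          exact ⟨p.2, Finset.mem_filter.mpr ⟨hb, by omega, le_rfl⟩, Or.inr (by omega)⟩
      -- outside family
      have hF2sub : ∀ q ∈ F.filter (fun q => q ≠ p ∧ ¬(p.1 ≤ q.1 ∧ q.2 ≤ p.2)),
          GenDiag (V.filter (fun x => x ≤ p.1 ∨ p.2 ≤ x)) q := by
        intro q hq
        rw [Finset.mem_filter] at hq
        obtain ⟨hqF, hqp, hni⟩ := hq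
        obtain ⟨hx1, hx2, ⟨u, hu, hu1, hu2⟩, ⟨x, hx, hxe⟩⟩ := hF q hqF
        have hnc : ¬ Crossing p q := hC p hp q hqF
        simp only [Crossing] at hnc
        have he1 : q.1 ≤ p.1 ∨ p.2 ≤ q.1 := by omega
        have he2 : q.2 ≤ p.1 ∨ p.2 ≤ q.2 := by omega
        refine ⟨Finset.mem_filter.mpr ⟨hx1, by omega⟩, Finset.mem_filter.mpr ⟨hx2, by omega⟩,
          ?_, ?_⟩
        · by_cases hc1 : q.2 ≤ p.1
          · exact ⟨u, Finset.mem_filter.mpr ⟨hu, by omega⟩, hu1, hu2⟩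
          by_cases hc2 : p.2 ≤ q.1
          · exact ⟨u, Finset.mem_filter.mpr ⟨hu, by omega⟩, hu1, hu2⟩
          by_cases hc3 : q.1 < p.1
          · exact ⟨p.1, Finset.mem_filter.mpr ⟨ha, Or.inl le_rfl⟩, hc3, by omega⟩
          · exact ⟨p.2, Finset.mem_filter.mpr ⟨hb, Or.inr le_rfl⟩, by omega, by omega⟩
        · by_cases hxv : x ≤ p.1 ∨ p.2 ≤ x
          · exact ⟨x, Finset.mem_filter.mpr ⟨hx, hxv⟩, hxe⟩
          · push_neg at hxv
            rcases hxe with h | h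
            · exact ⟨p.1, Finset.mem_filter.mpr ⟨ha, Or.inl le_rfl⟩, Or.inl (by omega)⟩
            · exact ⟨p.2, Finset.mem_filter.mpr ⟨hb, Or.inr le_rfl⟩, Or.inr (by omega)⟩
      -- split F
      have hsplit : (F.erase p) = F.filter (fun q => q ≠ p ∧ p.1 ≤ q.1 ∧ q.2 ≤ p.2)
          ∪ F.filter (fun q => q ≠ p ∧ ¬(p.1 ≤ q.1 ∧ q.2 ≤ p.2)) := by
        ext q
        simp only [Finset.mem_erase, Finset.mem_union, Finset.mem_filter]
        tauto
      have hdisjF : Disjoint (F.filter (fun q => q ≠ p ∧ p.1 ≤ q.1 ∧ q.2 ≤ p.2))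
          (F.filter (fun q => q ≠ p ∧ ¬(p.1 ≤ q.1 ∧ q.2 ≤ p.2))) := by
        rw [Finset.disjoint_left]
        intro q h1 h2
        rw [Finset.mem_filter] at h1 h2
        tauto
      have hcardF : F.card = 1 + (F.filter (fun q => q ≠ p ∧ p.1 ≤ q.1 ∧ q.2 ≤ p.2)).card
          + (F.filter (fun q => q ≠ p ∧ ¬(p.1 ≤ q.1 ∧ q.2 ≤ p.2))).card := by
        have h1 := Finset.card_union_of_disjoint hdisjF
        rw [← hsplit, Finset.card_erase_of_mem hp] at h1
        have : 0 < F.card := Finset.card_pos.mpr ⟨p, hp⟩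
        omega
      -- V cards
      have hVcard : (V.filter (fun x => p.1 ≤ x ∧ x ≤ p.2)).card
          + (V.filter (fun x => x ≤ p.1 ∨ p.2 ≤ x)).card = V.card + 2 := by
        have h1 := Finset.card_union_add_card_inter (V.filter (fun x => p.1 ≤ x ∧ x ≤ p.2))
          (V.filter (fun x => x ≤ p.1 ∨ p.2 ≤ x))
        have h2 : V.filter (fun x => p.1 ≤ x ∧ x ≤ p.2) ∪ V.filter (fun x => x ≤ p.1 ∨ p.2 ≤ x)
            = V := by
          ext x
          simp only [Finset.mem_union, Finset.mem_filter]
          constructor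
          · rintro (h | h) <;> exact h.1
          · intro hxV
            by_cases hc : p.1 ≤ x ∧ x ≤ p.2
            · exact Or.inl ⟨hxV, hc⟩
            · exact Or.inr ⟨hxV, by omega⟩
        have h3 : V.filter (fun x => p.1 ≤ x ∧ x ≤ p.2) ∩ V.filter (fun x => x ≤ p.1 ∨ p.2 ≤ x)
            = {p.1, p.2} := by
          ext x
          simp only [Finset.mem_inter, Finset.mem_filter, Finset.mem_insert, Finset.mem_singleton]
          constructor
          · rintro ⟨⟨-, h1'⟩, ⟨-, h2'⟩⟩
            omega
          · rintro (rfl | rfl)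
            · exact ⟨⟨ha, le_rfl, by omega⟩, ha, Or.inl le_rfl⟩
            · exact ⟨⟨hb, by omega, le_rfl⟩, hb, Or.inr le_rfl⟩
        have h4 : ({p.1, p.2} : Finset ℕ).card = 2 := by
          rw [Finset.card_insert_of_notMem (by simp; omega), Finset.card_singleton]
        rw [h2, h3, h4] at h1
        omega
      have hV1lt : (V.filter (fun x => p.1 ≤ x ∧ x ≤ p.2)).card < V.card := by
        apply Finset.card_lt_card
        rw [Finset.ssubset_iff_of_subset (Finset.filter_subset _ _)]
        refine ⟨w, hw, fun hmem => ?_⟩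
        rw [Finset.mem_filter] at hmem
        obtain ⟨-, h⟩ := hmem
        omega
      have hV2lt : (V.filter (fun x => x ≤ p.1 ∨ p.2 ≤ x)).card < V.card := by
        apply Finset.card_lt_card
        rw [Finset.ssubset_iff_of_subset (Finset.filter_subset _ _)]
        refine ⟨v, hv, fun hmem => ?_⟩
        rw [Finset.mem_filter] at hmem
        obtain ⟨-, h⟩ := hmem
        omega
      have h3a : 3 ≤ (V.filter (fun x => p.1 ≤ x ∧ x ≤ p.2)).card := by
        have hsub : ({p.1, v, p.2} : Finset ℕ) ⊆ V.filter (fun x => p.1 ≤ x ∧ x ≤ p.2) := by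
          intro x hx
          simp only [Finset.mem_insert, Finset.mem_singleton] at hx
          rcases hx with rfl | rfl | rfl
          · exact Finset.mem_filter.mpr ⟨ha, le_rfl, by omega⟩
          · exact Finset.mem_filter.mpr ⟨hv, by omega, by omega⟩
          · exact Finset.mem_filter.mpr ⟨hb, by omega, le_rfl⟩
        have hc3 : ({p.1, v, p.2} : Finset ℕ).card = 3 := by
          rw [Finset.card_insert_of_notMem (by simp; omega),
            Finset.card_insert_of_notMem (by simp; omega), Finset.card_singleton]
        rw [← hc3]
        exact Finset.card_le_card hsub
      have h3b : 3 ≤ (V.filter (fun x => x ≤ p.1 ∨ p.2 ≤ x)).card := by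
        have hsub : ({w, p.1, p.2} : Finset ℕ) ⊆ V.filter (fun x => x ≤ p.1 ∨ p.2 ≤ x) := by
          intro x hx
          simp only [Finset.mem_insert, Finset.mem_singleton] at hx
          rcases hx with rfl | rfl | rfl
          · exact Finset.mem_filter.mpr ⟨hw, by omega⟩
          · exact Finset.mem_filter.mpr ⟨ha, Or.inl le_rfl⟩
          · exact Finset.mem_filter.mpr ⟨hb, Or.inr le_rfl⟩
        have hc3 : ({w, p.1, p.2} : Finset ℕ).card = 3 := by
          rw [Finset.card_insert_of_notMem (by simp; omega),
            Finset.card_insert_of_notMem (by simp; omega), Finset.card_singleton]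
        rw [← hc3]
        exact Finset.card_le_card hsub
      have hind1 := ih (V.filter (fun x => p.1 ≤ x ∧ x ≤ p.2))
        (F.filter (fun q => q ≠ p ∧ p.1 ≤ q.1 ∧ q.2 ≤ p.2)) (by omega) hF1sub
        (fun q hq r hr => hC q (Finset.mem_of_mem_filter _ hq) r (Finset.mem_of_mem_filter _ hr))
      have hind2 := ih (V.filter (fun x => x ≤ p.1 ∨ p.2 ≤ x))
        (F.filter (fun q => q ≠ p ∧ ¬(p.1 ≤ q.1 ∧ q.2 ≤ p.2))) (by omega) hF2sub
        (fun q hq r hr => hC q (Finset.mem_of_mem_filter _ hq) r (Finset.mem_of_mem_filter _ hr))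
      omega

lemma sorted_getD_ge (c : ℕ) : ∀ (L : List ℕ), L.Pairwise (· ≥ ·) →
    ∀ i, i < L.countP (fun x => decide (c ≤ x)) → c ≤ L.getD i 0 := by
  intro L
  induction L with
  | nil => simp
  | cons x t ihh =>
    intro hL i hi
    have hst := List.pairwise_cons.mp hL
    rw [List.countP_cons] at hi
    by_cases hcx : c ≤ x
    · rcases i with _ | i
      · simpa using hcx
      · simp only [List.getD_cons_succ]
        apply ihh hst.2
        simp [hcx] at hi
        omega
    · have ht0 : t.countP (fun y => decide (c ≤ y)) = 0 := by
        rw [List.countP_eq_zero]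
        intro y hy
        have := hst.1 y hy
        simp only [decide_eq_true_eq]
        omega
      simp [hcx, ht0] at hi

lemma sorted_getD_lt (c : ℕ) : ∀ (L : List ℕ), L.Pairwise (· ≥ ·) →
    ∀ i, L.countP (fun x => decide (c ≤ x)) ≤ i → i < L.length → L.getD i 0 < c := by
  intro L
  induction L with
  | nil => simp
  | cons x t ihh =>
    intro hL i h1 h2
    have hst := List.pairwise_cons.mp hL
    rw [List.countP_cons] at h1
    by_cases hcx : c ≤ x
    · rcases i with _ | i
      · simp [hcx] at h1
      · simp only [List.getD_cons_succ]
        apply ihh hst.2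
        · simp [hcx] at h1; omega
        · simpa using h2
    · rcases i with _ | i
      · simpa using by omega
      · simp only [List.getD_cons_succ]
        apply ihh hst.2
        · have ht0 : t.countP (fun y => decide (c ≤ y)) = 0 := by
            rw [List.countP_eq_zero]
            intro y hy
            have := hst.1 y hy
            simp only [decide_eq_true_eq]
            omega
          omega
        · simpa using h2

lemma countP_tails (T : Finset (ℕ × ℕ)) (c : ℕ) :
    (tails T).countP (fun x => decide (c ≤ x)) = (T.filter (fun q => c ≤ q.1)).card := by
  have h1 : ((tails T : List ℕ) : Multiset ℕ) = T.val.map Prod.fst := Multiset.sort_eq _ _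
  have h2 : (tails T).countP (fun x => decide (c ≤ x))
      = Multiset.countP (fun x => c ≤ x) (T.val.map Prod.fst) := by
    rw [← h1, Multiset.coe_countP]
  rw [h2, Multiset.countP_map]
  rfl

lemma length_tails (T : Finset (ℕ × ℕ)) : (tails T).length = T.card := by
  unfold tails
  rw [Multiset.length_sort, Multiset.card_map]
  rfl

lemma lam_ge' {T : Finset (ℕ × ℕ)} {c m : ℕ} (hm : 1 ≤ m)
    (h : m ≤ (T.filter (fun q => c ≤ q.1)).card) : c ≤ lam T m := by
  have hs : (tails T).Pairwise (· ≥ ·) := Multiset.pairwise_sort _ _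
  have := sorted_getD_ge c (tails T) hs (m - 1) (by rw [countP_tails]; omega)
  unfold lam
  rw [if_neg (by omega : ¬ m = 0)]
  exact this

lemma lam_lt' {T : Finset (ℕ × ℕ)} {c m : ℕ} (hm : 1 ≤ m) (hN : m ≤ T.card)
    (h : (T.filter (fun q => c ≤ q.1)).card < m) : lam T m < c := by
  have hs : (tails T).Pairwise (· ≥ ·) := Multiset.pairwise_sort _ _
  have hlen : (tails T).length = T.card := length_tails T
  have := sorted_getD_lt c (tails T) hs (m - 1) (by rw [countP_tails]; omega) (by omega)
  unfold lam
  rw [if_neg (by omega : ¬ m = 0)]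
  exact this

lemma mid_card (n : ℕ) (T : Finset (ℕ × ℕ)) (hT : IsTriangulation (n + 2) T)
    {p : ℕ × ℕ} (hp : p ∈ T) {t : ℕ} (ht1 : p.1 < t) (ht2 : t < p.2) :
    (T.filter (fun q => t ≤ q.1 ∧ q.1 < p.2)).card ≤ p.2 - t - 1 := by
  classical
  obtain ⟨hdiag, hcross, -⟩ := hT
  have key : ∀ q ∈ (T.filter (fun q => t ≤ q.1 ∧ q.1 < p.2)).erase (t, p.2),
      GenDiag (Finset.Icc t p.2) q := by
    intro q hq
    rw [Finset.mem_erase, Finset.mem_filter] at hq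
    obtain ⟨hne, hqT, h1, h2⟩ := hq
    obtain ⟨hq2, hqb, -⟩ := hdiag q hqT
    have hnc : ¬ Crossing p q := hcross p hp q hqT
    simp only [Crossing] at hnc
    have hq2b : q.2 ≤ p.2 := by omega
    refine ⟨Finset.mem_Icc.mpr ⟨h1, by omega⟩, Finset.mem_Icc.mpr ⟨by omega, hq2b⟩,
      ⟨q.1 + 1, Finset.mem_Icc.mpr ⟨by omega, by omega⟩, by omega, by omega⟩, ?_⟩
    by_cases hc : t < q.1
    · exact ⟨t, Finset.mem_Icc.mpr ⟨le_rfl, by omega⟩, Or.inl hc⟩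
    · have hq1t : q.1 = t := by omega
      have hne2 : q.2 ≠ p.2 := fun h => hne (Prod.ext_iff.mpr ⟨hq1t, h⟩)
      exact ⟨p.2, Finset.mem_Icc.mpr ⟨by omega, le_rfl⟩, Or.inr (by omega)⟩
  have hbound := noncross_card (Finset.Icc t p.2).card _ _ le_rfl key
    (fun q hq r hr => hcross q (Finset.mem_of_mem_filter _ (Finset.mem_of_mem_erase hq))
      r (Finset.mem_of_mem_filter _ (Finset.mem_of_mem_erase hr)))
  rw [Nat.card_Icc] at hbound
  by_cases hm : (t, p.2) ∈ T.filter (fun q => t ≤ q.1 ∧ q.1 < p.2)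
  · have hdd := hdiag _ (Finset.mem_of_mem_filter _ hm)
    obtain ⟨hdd1, -, -⟩ := hdd
    simp only at hdd1
    rw [Finset.card_erase_of_mem hm] at hbound
    have : 0 < (T.filter (fun q => t ≤ q.1 ∧ q.1 < p.2)).card := Finset.card_pos.mpr ⟨_, hm⟩
    omega
  · rw [Finset.erase_eq_of_notMem hm] at hbound
    omega

lemma inside_card (n : ℕ) (T : Finset (ℕ × ℕ)) (hT : IsTriangulation (n + 2) T)
    {p : ℕ × ℕ} (hp : p ∈ T) :
    (T.filter (fun q => p.1 ≤ q.1 ∧ q.2 ≤ p.2)).card = p.2 - p.1 - 1 := by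
  classical
  obtain ⟨hdiag, hcross, hcard⟩ := hT
  obtain ⟨hab, hbn, h0n⟩ := hdiag p hp
  have hbn' : p.2 ≤ n + 1 := by omega
  have hInkey : ∀ q ∈ (T.filter (fun q => p.1 ≤ q.1 ∧ q.2 ≤ p.2)).erase p,
      GenDiag (Finset.Icc p.1 p.2) q := by
    intro q hq
    rw [Finset.mem_erase, Finset.mem_filter] at hq
    obtain ⟨hne, hqT, h1, h2⟩ := hq
    obtain ⟨hq2, -, -⟩ := hdiag q hqT
    refine ⟨Finset.mem_Icc.mpr ⟨h1, by omega⟩, Finset.mem_Icc.mpr ⟨by omega, h2⟩,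
      ⟨q.1 + 1, Finset.mem_Icc.mpr ⟨by omega, by omega⟩, by omega, by omega⟩, ?_⟩
    by_cases hc : p.1 < q.1
    · exact ⟨p.1, Finset.mem_Icc.mpr ⟨le_rfl, by omega⟩, Or.inl hc⟩
    · have h1' : q.1 = p.1 := by omega
      have h2' : q.2 ≠ p.2 := fun h => hne (Prod.ext_iff.mpr ⟨h1', h⟩)
      exact ⟨p.2, Finset.mem_Icc.mpr ⟨by omega, le_rfl⟩, Or.inr (by omega)⟩
  have hIn := noncross_card (Finset.Icc p.1 p.2).card _ _ le_rfl hInkey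
    (fun q hq r hr => hcross q (Finset.mem_of_mem_filter _ (Finset.mem_of_mem_erase hq))
      r (Finset.mem_of_mem_filter _ (Finset.mem_of_mem_erase hr)))
  rw [Nat.card_Icc] at hIn
  have hOutkey : ∀ q ∈ T.filter (fun q => ¬(p.1 ≤ q.1 ∧ q.2 ≤ p.2)),
      GenDiag (Finset.Icc 0 p.1 ∪ Finset.Icc p.2 (n + 1)) q := by
    intro q hq
    rw [Finset.mem_filter] at hq
    obtain ⟨hqT, hni⟩ := hq
    obtain ⟨hqd, hqb, hq0⟩ := hdiag q hqT
    have hqb' : q.2 ≤ n + 1 := by omega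
    have hq0' : ¬(q.1 = 0 ∧ q.2 = n + 1) := by omega
    have hnc : ¬ Crossing p q := hcross p hp q hqT
    simp only [Crossing] at hnc
    have he1 : q.1 ≤ p.1 ∨ p.2 ≤ q.1 := by omega
    have he2 : q.2 ≤ p.1 ∨ p.2 ≤ q.2 := by omega
    have hmem : ∀ x, x ≤ p.1 ∨ p.2 ≤ x → x ≤ n + 1 →
        x ∈ Finset.Icc 0 p.1 ∪ Finset.Icc p.2 (n + 1) := by
      intro x hx hx2
      rcases hx with h | h
      · exact Finset.mem_union_left _ (Finset.mem_Icc.mpr ⟨Nat.zero_le _, h⟩)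
      · exact Finset.mem_union_right _ (Finset.mem_Icc.mpr ⟨h, hx2⟩)
    refine ⟨hmem _ he1 (by omega), hmem _ he2 hqb', ?_, ?_⟩
    · by_cases hc1 : q.2 ≤ p.1
      · exact ⟨q.1 + 1, hmem _ (by omega) (by omega), by omega, by omega⟩
      by_cases hc2 : p.2 ≤ q.1
      · exact ⟨q.1 + 1, hmem _ (by omega) (by omega), by omega, by omega⟩
      by_cases hc3 : q.1 < p.1
      · exact ⟨p.1, hmem _ (Or.inl le_rfl) (by omega), hc3, by omega⟩
      · exact ⟨p.2, hmem _ (Or.inr le_rfl) (by omega), by omega, by omega⟩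
    · by_cases hc : 0 < q.1
      · exact ⟨0, hmem 0 (Or.inl (Nat.zero_le _)) (by omega), Or.inl hc⟩
      · exact ⟨n + 1, hmem _ (Or.inr (by omega)) le_rfl, Or.inr (by omega)⟩
  have hOut := noncross_card (Finset.Icc 0 p.1 ∪ Finset.Icc p.2 (n + 1)).card _ _ le_rfl hOutkey
    (fun q hq r hr => hcross q (Finset.mem_of_mem_filter _ hq) r (Finset.mem_of_mem_filter _ hr))
  have hVout : (Finset.Icc 0 p.1 ∪ Finset.Icc p.2 (n + 1)).card = (p.1 + 1) + (n + 2 - p.2) := by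
    rw [Finset.card_union_of_disjoint, Nat.card_Icc, Nat.card_Icc]
    · omega
    · rw [Finset.disjoint_left]
      intro x h1 h2
      rw [Finset.mem_Icc] at h1 h2
      omega
  rw [hVout] at hOut
  have hfsplit : (T.filter (fun q => p.1 ≤ q.1 ∧ q.2 ≤ p.2)).card
      + (T.filter (fun q => ¬(p.1 ≤ q.1 ∧ q.2 ≤ p.2))).card = T.card :=
    Finset.card_filter_add_card_filter_not _
  have hpmem : p ∈ T.filter (fun q => p.1 ≤ q.1 ∧ q.2 ≤ p.2) :=
    Finset.mem_filter.mpr ⟨hp, le_rfl, le_rfl⟩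
  have herase := Finset.card_erase_of_mem hpmem
  have hone : 0 < (T.filter (fun q => p.1 ≤ q.1 ∧ q.2 ≤ p.2)).card :=
    Finset.card_pos.mpr ⟨p, hpmem⟩
  omega

/-- For a Young diagram `D ∈ Y_n` with rows `d`, the head of the `k`-th diagonal
of the triangulation `Λ_{n+2}⁻¹(D)` equals
`1 + k + d_k - max({m : m < k, m + d_m > k + d_k} ∪ {0})`. -/
theorem head_of_kth_diagonal (n : ℕ) (T : Finset (ℕ × ℕ))
    (hT : IsTriangulation (n + 2) T) (d : ℕ → ℕ) (hd : lam T = d)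
    (p : ℕ × ℕ) (hp : p ∈ T) (k : ℕ) (hk : diagPos T p = k) :
    p.2 = headFormula d k := by
  subst hd
  classical
  have hIns := inside_card n T hT hp
  have hMid := fun {t} (h1 : p.1 < t) (h2 : t < p.2) => mid_card n T hT hp h1 h2
  obtain ⟨hdiag, hcross, hcardT⟩ := hT
  obtain ⟨hab, hbn, h0n⟩ := hdiag p hp
  unfold diagPos at hk
  have hk1 : 1 ≤ k := by omega
  -- P ⊆ T.erase p, so k ≤ T.card
  have hpP : p ∉ T.filter (fun q => p.1 < q.1 ∨ (q.1 = p.1 ∧ q.2 < p.2)) := by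
    rw [Finset.mem_filter]
    rintro ⟨-, h⟩
    omega
  have hPT : T.filter (fun q => p.1 < q.1 ∨ (q.1 = p.1 ∧ q.2 < p.2)) ⊆ T.erase p := by
    intro q hq
    exact Finset.mem_erase.mpr ⟨fun h => hpP (h ▸ hq), Finset.mem_of_mem_filter _ hq⟩
  have hkN : k ≤ T.card := by
    have h1 := Finset.card_le_card hPT
    rw [Finset.card_erase_of_mem hp] at h1
    have h2 : 0 < T.card := Finset.card_pos.mpr ⟨p, hp⟩
    omega
  -- k ≤ cnt (p.1)
  have hcntA : k ≤ (T.filter (fun q => p.1 ≤ q.1)).card := by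
    have hsub : T.filter (fun q => p.1 < q.1 ∨ (q.1 = p.1 ∧ q.2 < p.2))
        ⊆ (T.filter (fun q => p.1 ≤ q.1)).erase p := by
      intro q hq
      rw [Finset.mem_filter] at hq
      rw [Finset.mem_erase, Finset.mem_filter]
      refine ⟨fun h => ?_, hq.1, by omega⟩
      rw [h] at hq
      omega
    have h1 := Finset.card_le_card hsub
    have hpm : p ∈ T.filter (fun q => p.1 ≤ q.1) := Finset.mem_filter.mpr ⟨hp, le_rfl⟩
    rw [Finset.card_erase_of_mem hpm] at h1
    have h2 : 0 < (T.filter (fun q => p.1 ≤ q.1)).card := Finset.card_pos.mpr ⟨p, hpm⟩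
    omega
  have hlamA : lam T k = p.1 := by
    have h1 : p.1 ≤ lam T k := lam_ge' hk1 hcntA
    have h2 : lam T k < p.1 + 1 := by
      apply lam_lt' hk1 hkN
      have hsub : T.filter (fun q => p.1 + 1 ≤ q.1)
          ⊆ T.filter (fun q => p.1 < q.1 ∨ (q.1 = p.1 ∧ q.2 < p.2)) := by
        intro q hq
        rw [Finset.mem_filter] at hq ⊢
        exact ⟨hq.1, Or.inl (by omega)⟩
      have := Finset.card_le_card hsub
      omega
    omega
  -- key identity : k + p.1 + 1 = p.2 + S
  have hPeq : T.filter (fun q => p.1 < q.1 ∨ (q.1 = p.1 ∧ q.2 < p.2))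
      = ((T.filter (fun q => p.1 ≤ q.1 ∧ q.2 ≤ p.2)).erase p)
        ∪ (T.filter (fun q => p.2 ≤ q.1)) := by
    ext q
    simp only [Finset.mem_filter, Finset.mem_union, Finset.mem_erase]
    constructor
    · rintro ⟨hq, hcond⟩
      by_cases hbq : p.2 ≤ q.1
      · exact Or.inr ⟨hq, hbq⟩
      · left
        have hnc : ¬ Crossing p q := hcross p hp q hq
        simp only [Crossing] at hnc
        obtain ⟨hq2, -, -⟩ := hdiag q hq
        refine ⟨fun h => ?_, hq, by omega, by omega⟩
        · rw [h] at hcond; omega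
    · rintro (⟨hne, hq, h1, h2⟩ | ⟨hq, hbq⟩)
      · refine ⟨hq, ?_⟩
        rcases Nat.lt_or_ge p.1 q.1 with h | h
        · exact Or.inl h
        · have hq1 : q.1 = p.1 := by omega
          have : q.2 ≠ p.2 := fun h' => hne (Prod.ext_iff.mpr ⟨hq1, h'⟩)
          exact Or.inr ⟨hq1, by omega⟩
      · exact ⟨hq, Or.inl (by omega)⟩
  have hdisj : Disjoint ((T.filter (fun q => p.1 ≤ q.1 ∧ q.2 ≤ p.2)).erase p)
      (T.filter (fun q => p.2 ≤ q.1)) := by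
    rw [Finset.disjoint_left]
    intro q h1 h2
    rw [Finset.mem_erase, Finset.mem_filter] at h1
    rw [Finset.mem_filter] at h2
    obtain ⟨-, hqT, -, hle⟩ := h1
    obtain ⟨hd1, -, -⟩ := hdiag q hqT
    omega
  have hpmem : p ∈ T.filter (fun q => p.1 ≤ q.1 ∧ q.2 ≤ p.2) :=
    Finset.mem_filter.mpr ⟨hp, le_rfl, le_rfl⟩
  have hkey : k + p.1 + 1 = p.2 + (T.filter (fun q => p.2 ≤ q.1)).card := by
    have hcu := Finset.card_union_of_disjoint hdisj
    rw [← hPeq] at hcu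
    rw [Finset.card_erase_of_mem hpmem, hIns] at hcu
    omega
  -- the max is S
  have hMle : ∀ x ∈ insert 0 ((Finset.Ico 1 k).filter (fun m => k + lam T k < m + lam T m)),
      x ≤ (T.filter (fun q => p.2 ≤ q.1)).card := by
    intro x hx
    rcases Finset.mem_insert.mp hx with rfl | hx
    · exact Nat.zero_le _
    · simp only [Finset.mem_filter, Finset.mem_Ico] at hx
      obtain ⟨⟨hx1, hxk⟩, hxgt⟩ := hx
      rw [hlamA] at hxgt
      by_contra hcon
      push_neg at hcon
      have hta : p.1 ≤ lam T x := lam_ge' hx1 (by omega)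
      have htb : lam T x < p.2 := lam_lt' hx1 (by omega) (by omega)
      have htne : lam T x ≠ p.1 := by
        intro h
        rw [h] at hxgt
        omega
      have hxcnt : x ≤ (T.filter (fun q => lam T x ≤ q.1)).card := by
        by_contra hc
        push_neg at hc
        have := lam_lt' hx1 (by omega) hc
        omega
      have hun : T.filter (fun q => lam T x ≤ q.1)
          = (T.filter (fun q => lam T x ≤ q.1 ∧ q.1 < p.2)) ∪ (T.filter (fun q => p.2 ≤ q.1)) := by
        ext q
        simp only [Finset.mem_filter, Finset.mem_union]
        constructor
        · rintro ⟨h1, h2⟩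
          by_cases hb' : p.2 ≤ q.1
          · exact Or.inr ⟨h1, hb'⟩
          · exact Or.inl ⟨h1, h2, by omega⟩
        · rintro (⟨h1, h2, -⟩ | ⟨h1, h2⟩)
          · exact ⟨h1, h2⟩
          · exact ⟨h1, by omega⟩
      have hdj : Disjoint (T.filter (fun q => lam T x ≤ q.1 ∧ q.1 < p.2))
          (T.filter (fun q => p.2 ≤ q.1)) := by
        rw [Finset.disjoint_left]
        intro q h1 h2
        rw [Finset.mem_filter] at h1 h2
        omega
      rw [hun, Finset.card_union_of_disjoint hdj] at hxcnt
      have hmid := hMid (t := lam T x) (by omega) (by omega)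
      omega
  have hSleM : (T.filter (fun q => p.2 ≤ q.1)).card
      ≤ (insert 0 ((Finset.Ico 1 k).filter (fun m => k + lam T k < m + lam T m))).max'
        (Finset.insert_nonempty 0 _) := by
    by_cases hS0 : (T.filter (fun q => p.2 ≤ q.1)).card = 0
    · rw [hS0]; exact Nat.zero_le _
    · apply Finset.le_max'
      apply Finset.mem_insert.mpr
      right
      simp only [Finset.mem_filter, Finset.mem_Ico]
      have hdS : p.2 ≤ lam T ((T.filter (fun q => p.2 ≤ q.1)).card) :=
        lam_ge' (by omega) le_rfl
      exact ⟨⟨by omega, by omega⟩, by rw [hlamA]; omega⟩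
  have hM : (insert 0 ((Finset.Ico 1 k).filter (fun m => k + lam T k < m + lam T m))).max'
      (Finset.insert_nonempty 0 _) = (T.filter (fun q => p.2 ≤ q.1)).card :=
    le_antisymm (Finset.max'_le _ _ _ hMle) hSleM
  unfold headFormula
  rw [hM, hlamA]
  omega
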